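/- Let (Ω, 𝓕, μ) be a standard Borel probability space. Let A, S : Ω → ℝ take values in {0,1}, let Y₁, Y₀ be bounded real-valued random variables, set Y = A·Y₁ + (1 − A)·Y₀, let X : Ω → ℝ^d be measurable. Suppose Y₁ is conditionally independent of A given σ(X), and the pair (Y, A) is conditionally independent of S given σ(X). Suppose there exists a constant c > 0 such that E[A·S | σ(X)] ≥ c almost everywhere, and let μ₁ : ℝ^d → ℝ be a bounded measurable function such that (μ₁ ∘ X)·E[A·S | σ(X)] is a version of E[A·S·Y | σ(X)]. Then E[μ₁(X)] = E[Y₁]. (Regression form of the generalization identification: the conditional mean of Y given X among treated, validated subjects, averaged over the full covariate distribution, recovers the target counterfactual mean.) -/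

import Mathlib

open MeasureTheory ProbabilityTheory

lemma aux_setIntegral_condexp_mul {Ω : Type*} {m' mΩ : MeasurableSpace Ω}
    {μ : Measure Ω} [IsProbabilityMeasure μ]
    (hm' : m' ≤ mΩ) {U g : Ω → ℝ} (hUint : Integrable U μ)
    (hgm : StronglyMeasurable[m'] g) {C : ℝ} (hgb : ∀ᵐ ω ∂μ, ‖g ω‖ ≤ C)
    {s : Set Ω} (hs : MeasurableSet[m'] s) :
    ∫ ω in s, (μ[U|m']) ω * g ω ∂μ = ∫ ω in s, U ω * g ω ∂μ := by
  have hpull : μ[g * U|m'] =ᵐ[μ] g * μ[U|m'] :=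
    condExp_stronglyMeasurable_mul_of_bound hm' hgm hUint C hgb
  have hgU : Integrable (fun ω => g ω * U ω) μ :=
    hUint.bdd_mul ((hgm.mono hm').aestronglyMeasurable) hgb
  have h1 : ∫ ω in s, (g * U) ω ∂μ = ∫ ω in s, (μ[g * U|m']) ω ∂μ :=
    (setIntegral_condExp hm' hgU hs).symm
  calc ∫ ω in s, (μ[U|m']) ω * g ω ∂μ
      = ∫ ω in s, (g * μ[U|m']) ω ∂μ := by
        refine setIntegral_congr_ae (hm' s hs) (ae_of_all _ fun ω _ => ?_)
        simp [mul_comm]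
    _ = ∫ ω in s, (μ[g * U|m']) ω ∂μ :=
        (setIntegral_congr_ae (hm' s hs) (hpull.mono fun ω hω _ => hω.symm))
    _ = ∫ ω in s, (g * U) ω ∂μ := h1.symm
    _ = ∫ ω in s, U ω * g ω ∂μ := by
        refine setIntegral_congr_ae (hm' s hs) (ae_of_all _ fun ω _ => ?_)
        simp [mul_comm]

/-- Product rule for conditional expectation under conditional independence:
if `U` is bounded `m₁`-measurable and `t ∈ m₂` with `m₁` and `m₂` conditionally
independent given `m'`, then `E[U · 1_t | m'] = E[U | m'] · E[1_t | m']`. -/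
lemma condexp_mul_indicator_of_condIndep {Ω : Type*} {m' m₁ m₂ mΩ : MeasurableSpace Ω}
    [StandardBorelSpace Ω] {μ : Measure Ω} [IsProbabilityMeasure μ]
    (hm' : m' ≤ mΩ) (hm₁ : m₁ ≤ mΩ) (hm₂ : m₂ ≤ mΩ)
    (hCI : CondIndep m' m₁ m₂ hm' μ)
    {U : Ω → ℝ} (hU : Measurable[m₁] U) {M : ℝ} (hUb : ∀ ω, |U ω| ≤ M)
    {t : Set Ω} (ht : MeasurableSet[m₂] t) :
    (μ[fun ω => U ω * t.indicator (fun _ => (1:ℝ)) ω | m']) =ᵐ[μ]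
      fun ω => (μ[U|m']) ω * (μ[t.indicator (fun _ => (1:ℝ)) | m']) ω := by
  set g : Ω → ℝ := μ[t.indicator (fun _ => (1:ℝ)) | m'] with hg_def
  have htm : MeasurableSet t := hm₂ t ht
  have hUm : Measurable U := hU.mono hm₁ le_rfl
  have hUint : Integrable U μ := by
    refine Integrable.mono' (integrable_const M) hUm.aestronglyMeasurable
      (ae_of_all _ fun ω => ?_)
    simpa [Real.norm_eq_abs] using hUb ω
  have hInd_int : Integrable (t.indicator (fun _ => (1:ℝ))) μ :=
    (integrable_const (1:ℝ)).indicator htm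
  have hg_nonneg : 0 ≤ᵐ[μ] g :=
    condExp_nonneg (ae_of_all _ fun ω => Set.indicator_nonneg (fun _ _ => zero_le_one) ω)
  have hg_le_one : g ≤ᵐ[μ] fun _ => (1:ℝ) := by
    have h := condExp_mono (m := m') hInd_int (integrable_const (1:ℝ))
      (ae_of_all _ fun ω => Set.indicator_le_self' (fun _ _ => zero_le_one) ω)
    rwa [condExp_const hm'] at h
  have hg_bound : ∀ᵐ ω ∂μ, ‖g ω‖ ≤ 1 := by
    filter_upwards [hg_nonneg, hg_le_one] with ω h0 h1
    simp only [Pi.zero_apply] at h0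
    rw [Real.norm_eq_abs, abs_le]
    exact ⟨by linarith, h1⟩
  have hgm : StronglyMeasurable[m'] g := stronglyMeasurable_condExp
  -- the indicator identity from conditional independence
  have hkey : ∀ u : Set Ω, MeasurableSet[m₁] u →
      (μ[(u ∩ t).indicator (fun _ => (1:ℝ)) | m']) =ᵐ[μ]
        (μ[u.indicator (fun _ => (1:ℝ)) | m']) * g :=
    fun u hu => (condIndep_iff m' m₁ m₂ hm' hm₁ hm₂ μ).mp hCI u t hu ht
  -- swap lemma for indicators
  have hswap : ∀ (F : Ω → ℝ) (u s : Set Ω), MeasurableSet u → MeasurableSet s →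
      ∫ ω in u, s.indicator (fun _ => (1:ℝ)) ω * F ω ∂μ
        = ∫ ω in s, u.indicator (fun _ => (1:ℝ)) ω * F ω ∂μ := by
    intro F u s hu hs
    rw [← integral_indicator hu, ← integral_indicator hs]
    congr 1
    funext ω
    classical
    by_cases hω1 : ω ∈ u <;> by_cases hω2 : ω ∈ s <;>
      simp [Set.indicator_apply, hω1, hω2]
  -- indicator version of the factorization, integrated over s
  have hind_eq : ∀ s : Set Ω, MeasurableSet[m'] s → ∀ u : Set Ω, MeasurableSet[m₁] u →
      ∫ ω in s, u.indicator (fun _ => (1:ℝ)) ω * t.indicator (fun _ => (1:ℝ)) ω ∂μ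
        = ∫ ω in s, u.indicator (fun _ => (1:ℝ)) ω * g ω ∂μ := by
    intro s hs u hu
    have hum : MeasurableSet u := hm₁ u hu
    have huint : Integrable (u.indicator (fun _ => (1:ℝ))) μ :=
      (integrable_const (1:ℝ)).indicator hum
    have h1 : ∫ ω in s, u.indicator (fun _ => (1:ℝ)) ω * t.indicator (fun _ => (1:ℝ)) ω ∂μ
        = ∫ ω in s, (u ∩ t).indicator (fun _ => (1:ℝ)) ω ∂μ := by
      refine setIntegral_congr_ae (hm' s hs) (ae_of_all _ fun ω _ => ?_)
      classical
      by_cases h1 : ω ∈ u <;> by_cases h2 : ω ∈ t <;>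
        simp [Set.indicator_apply, h1, h2, Set.mem_inter_iff]
    have h2 : ∫ ω in s, (u ∩ t).indicator (fun _ => (1:ℝ)) ω ∂μ
        = ∫ ω in s, (μ[(u ∩ t).indicator (fun _ => (1:ℝ))|m']) ω ∂μ :=
      (setIntegral_condExp hm' ((integrable_const (1:ℝ)).indicator (hum.inter htm)) hs).symm
    have h3 : ∫ ω in s, (μ[(u ∩ t).indicator (fun _ => (1:ℝ))|m']) ω ∂μ
        = ∫ ω in s, (μ[u.indicator (fun _ => (1:ℝ))|m']) ω * g ω ∂μ :=
      setIntegral_congr_ae (hm' s hs) ((hkey u hu).mono fun ω hω _ => hω)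
    rw [h1, h2, h3, aux_setIntegral_condexp_mul hm' huint hgm hg_bound hs]
  -- main step: ∫_s U·1_t = ∫_s U·g for all s ∈ m'
  have hUnorm : ∀ᵐ ω ∂μ, ‖U ω‖ ≤ M := ae_of_all _ fun ω => by
    simpa [Real.norm_eq_abs] using hUb ω
  have hUt_int : Integrable (fun ω => U ω * t.indicator (fun _ => (1:ℝ)) ω) μ :=
    hInd_int.bdd_mul hUm.aestronglyMeasurable hUnorm
  have hUg_int : Integrable (fun ω => U ω * g ω) μ :=
    integrable_condExp.bdd_mul hUm.aestronglyMeasurable hUnorm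
  have hmain : ∀ s : Set Ω, MeasurableSet[m'] s →
      ∫ ω in s, U ω * t.indicator (fun _ => (1:ℝ)) ω ∂μ = ∫ ω in s, U ω * g ω ∂μ := by
    intro s hs
    set h : Ω → ℝ := fun ω => s.indicator (fun _ => (1:ℝ)) ω *
      (t.indicator (fun _ => (1:ℝ)) ω - g ω) with hh_def
    have hsm : MeasurableSet s := hm' s hs
    have hs_ind_norm : ∀ᵐ ω ∂μ, ‖s.indicator (fun _ => (1:ℝ)) ω‖ ≤ 1 := by
      refine ae_of_all _ fun ω => ?_
      classical
      by_cases hω : ω ∈ s <;> simp [Set.indicator_apply, hω]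
    have hdiff_int : Integrable (fun ω => t.indicator (fun _ => (1:ℝ)) ω - g ω) μ :=
      hInd_int.sub integrable_condExp
    have hh_int : Integrable h μ :=
      hdiff_int.bdd_mul (stronglyMeasurable_const.indicator hsm).aestronglyMeasurable
        hs_ind_norm
    have hst_int : Integrable (fun ω => s.indicator (fun _ => (1:ℝ)) ω *
        t.indicator (fun _ => (1:ℝ)) ω) μ :=
      hInd_int.bdd_mul (stronglyMeasurable_const.indicator hsm).aestronglyMeasurable
        hs_ind_norm
    have hsg_int : Integrable (fun ω => s.indicator (fun _ => (1:ℝ)) ω * g ω) μ :=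
      integrable_condExp.bdd_mul
        (stronglyMeasurable_const.indicator hsm).aestronglyMeasurable hs_ind_norm
    -- E[h | m₁] = 0
    have hcond0 : (fun _ => (0:ℝ)) =ᵐ[μ] μ[h|m₁] := by
      refine ae_eq_condExp_of_forall_setIntegral_eq hm₁ hh_int
        (fun u hu _ => (integrable_const (0:ℝ)).integrableOn) (fun u hu _ => ?_)
        (stronglyMeasurable_const.aestronglyMeasurable)
      have hum : MeasurableSet u := hm₁ u hu
      have hsplit : ∫ ω in u, h ω ∂μ
          = ∫ ω in u, s.indicator (fun _ => (1:ℝ)) ω * t.indicator (fun _ => (1:ℝ)) ω ∂μ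
            - ∫ ω in u, s.indicator (fun _ => (1:ℝ)) ω * g ω ∂μ := by
        rw [← integral_sub hst_int.integrableOn hsg_int.integrableOn]
        refine setIntegral_congr_ae hum (ae_of_all _ fun ω _ => ?_)
        simp only [hh_def]
        ring
      rw [hsplit, hswap _ u s hum hsm, hswap g u s hum hsm, hind_eq s hs u hu]
      simp
    -- hence ∫ U·h = 0
    have hUh_int : Integrable (fun ω => U ω * h ω) μ :=
      hh_int.bdd_mul hUm.aestronglyMeasurable hUnorm
    have hpull2 : μ[(fun ω => U ω * h ω)|m₁] =ᵐ[μ] fun ω => U ω * (μ[h|m₁]) ω :=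
      condExp_stronglyMeasurable_mul_of_bound hm₁ hU.stronglyMeasurable hh_int M hUnorm
    have hzero : ∫ ω, U ω * h ω ∂μ = 0 := by
      rw [← integral_condExp hm₁ (f := fun ω => U ω * h ω)]
      calc ∫ ω, (μ[(fun ω => U ω * h ω)|m₁]) ω ∂μ
          = ∫ ω, U ω * (μ[h|m₁]) ω ∂μ := integral_congr_ae hpull2
        _ = ∫ ω, (0:ℝ) ∂μ := integral_congr_ae
            (hcond0.symm.mono fun ω hω => by show U ω * (μ[h|m₁]) ω = (0:ℝ); rw [hω]; simp)
        _ = 0 := by simp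
    have hfin : ∫ ω, U ω * h ω ∂μ
        = ∫ ω in s, U ω * t.indicator (fun _ => (1:ℝ)) ω ∂μ - ∫ ω in s, U ω * g ω ∂μ := by
      rw [← integral_sub hUt_int.integrableOn hUg_int.integrableOn]
      rw [← integral_indicator hsm]
      congr 1
      funext ω
      classical
      by_cases hω : ω ∈ s <;> by_cases hω2 : ω ∈ t <;>
        simp [hh_def, Set.indicator_apply, hω, hω2] <;> ring
    have := hfin ▸ hzero
    linarith [this]
  -- uniqueness of conditional expectation
  have hprod_int : Integrable (fun ω => (μ[U|m']) ω * g ω) μ := by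
    have h2 := (integrable_condExp (m := m') (f := U)).bdd_mul
      ((hgm.mono hm').aestronglyMeasurable) hg_bound
    exact h2.congr (ae_of_all _ fun ω => mul_comm _ _)
  refine (ae_eq_condExp_of_forall_setIntegral_eq hm' hUt_int
    (fun s hs _ => hprod_int.integrableOn) (fun s hs _ => ?_)
    ((stronglyMeasurable_condExp.mul stronglyMeasurable_condExp).aestronglyMeasurable)).symm
  rw [aux_setIntegral_condexp_mul hm' hUint hgm hg_bound hs]
  exact (hmain s hs).symm

/-- Regression form of the generalization identification: the conditional mean of Y given X
among treated, validated subjects, averaged over the full covariate distribution, recovers the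
target counterfactual mean: E[μ₁(X)] = E[Y₁]. -/
theorem regression_generalization_identification
    {Ω : Type*} [MeasurableSpace Ω] [StandardBorelSpace Ω]
    (μ : Measure Ω) [IsProbabilityMeasure μ]
    {d : ℕ} (A S Y Y₁ Y₀ : Ω → ℝ) (X : Ω → (Fin d → ℝ))
    (μ₁ : (Fin d → ℝ) → ℝ) (c : ℝ)
    (hA : Measurable A) (hAval : ∀ ω, A ω = 0 ∨ A ω = 1)
    (hS : Measurable S) (hSval : ∀ ω, S ω = 0 ∨ S ω = 1)
    (hY₁ : Measurable Y₁) (hY₀ : Measurable Y₀)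
    (hY₁b : ∃ M, ∀ ω, |Y₁ ω| ≤ M) (hY₀b : ∃ M, ∀ ω, |Y₀ ω| ≤ M)
    (hYdef : ∀ ω, Y ω = A ω * Y₁ ω + (1 - A ω) * Y₀ ω)
    (hX : Measurable X)
    (hCI : CondIndep (MeasurableSpace.comap X inferInstance)
      (MeasurableSpace.comap Y₁ inferInstance)
      (MeasurableSpace.comap A inferInstance)
      hX.comap_le μ)
    (hCIS : CondIndep (MeasurableSpace.comap X inferInstance)
      (MeasurableSpace.comap (fun ω => (Y ω, A ω)) inferInstance)
      (MeasurableSpace.comap S inferInstance)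
      hX.comap_le μ)
    (hc : 0 < c)
    (hASlb : ∀ᵐ ω ∂μ, c ≤ (μ[fun ω' => A ω' * S ω' | MeasurableSpace.comap X inferInstance]) ω)
    (hμ₁ : Measurable μ₁) (hμ₁b : ∃ M, ∀ x, |μ₁ x| ≤ M)
    (hμ₁ver : (fun ω =>
        μ₁ (X ω) * (μ[fun ω' => A ω' * S ω' | MeasurableSpace.comap X inferInstance]) ω)
      =ᵐ[μ] μ[fun ω' => A ω' * S ω' * Y ω' | MeasurableSpace.comap X inferInstance]) :
    ∫ ω, μ₁ (X ω) ∂μ = ∫ ω, Y₁ ω ∂μ := by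
  obtain ⟨M₁, hM₁⟩ := hY₁b
  have hm' : MeasurableSpace.comap X inferInstance ≤ _ := hX.comap_le
  -- `Y` is measurable
  have hYmeas : Measurable Y := by
    have hYeq : Y = fun ω => A ω * Y₁ ω + (1 - A ω) * Y₀ ω := funext hYdef
    rw [hYeq]
    exact ((hA.mul hY₁).add ((measurable_const.sub hA).mul hY₀))
  -- indicator representations of A and S
  set tA : Set Ω := A ⁻¹' {1} with htA_def
  set tS : Set Ω := S ⁻¹' {1} with htS_def
  have hA_ind : ∀ ω, A ω = tA.indicator (fun _ => (1:ℝ)) ω := by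
    intro ω
    rcases hAval ω with h | h <;>
      simp [htA_def, Set.indicator_apply, Set.mem_preimage, h]
  have hS_ind : ∀ ω, S ω = tS.indicator (fun _ => (1:ℝ)) ω := by
    intro ω
    rcases hSval ω with h | h <;>
      simp [htS_def, Set.indicator_apply, Set.mem_preimage, h]
  -- measurability with respect to the comap σ-algebras
  have hYA_meas : Measurable[MeasurableSpace.comap (fun ω => (Y ω, A ω)) inferInstance]
      (fun ω => (Y ω, A ω)) := measurable_iff_comap_le.mpr le_rfl
  have hA_mYA : Measurable[MeasurableSpace.comap (fun ω => (Y ω, A ω)) inferInstance] A :=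
    measurable_snd.comp hYA_meas
  have hAY_mYA : Measurable[MeasurableSpace.comap (fun ω => (Y ω, A ω)) inferInstance]
      (fun ω => A ω * Y ω) :=
    (measurable_snd.comp hYA_meas).mul (measurable_fst.comp hYA_meas)
  have hY₁_m : Measurable[MeasurableSpace.comap Y₁ inferInstance] Y₁ :=
    measurable_iff_comap_le.mpr le_rfl
  have htS : MeasurableSet[MeasurableSpace.comap S inferInstance] tS :=
    ⟨{1}, measurableSet_singleton 1, rfl⟩
  have htA : MeasurableSet[MeasurableSpace.comap A inferInstance] tA :=
    ⟨{1}, measurableSet_singleton 1, rfl⟩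
  -- bounds
  have hA1 : ∀ ω, |A ω| ≤ 1 := fun ω => by rcases hAval ω with h | h <;> simp [h]
  have hAY_eq : ∀ ω, A ω * Y ω = A ω * Y₁ ω := by
    intro ω
    rcases hAval ω with h | h <;> simp [hYdef ω, h]
  have hAYb : ∀ ω, |A ω * Y ω| ≤ M₁ := by
    intro ω
    rw [hAY_eq ω, abs_mul]
    calc |A ω| * |Y₁ ω| ≤ 1 * M₁ :=
          mul_le_mul (hA1 ω) (hM₁ ω) (abs_nonneg _) zero_le_one
      _ = M₁ := one_mul _
  -- the three factorizations
  have F1 := condexp_mul_indicator_of_condIndep hm' (hYmeas.prodMk hA).comap_le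
    hS.comap_le hCIS hAY_mYA hAYb htS
  have F2 := condexp_mul_indicator_of_condIndep hm' (hYmeas.prodMk hA).comap_le
    hS.comap_le hCIS hA_mYA hA1 htS
  have F3 := condexp_mul_indicator_of_condIndep hm' hY₁.comap_le hA.comap_le hCI
    hY₁_m hM₁ htA
  -- congruences between the various functions
  have cg1 : (fun ω => A ω * S ω * Y ω)
      = fun ω => (A ω * Y ω) * tS.indicator (fun _ => (1:ℝ)) ω := by
    funext ω; rw [← hS_ind ω]; ring
  have cg2 : (fun ω => A ω * S ω) = fun ω => A ω * tS.indicator (fun _ => (1:ℝ)) ω := by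
    funext ω; rw [← hS_ind ω]
  have cg3 : (fun ω => A ω * Y ω) = fun ω => Y₁ ω * tA.indicator (fun _ => (1:ℝ)) ω := by
    funext ω; rw [hAY_eq ω, ← hA_ind ω]; ring
  have cg4 : A = tA.indicator (fun _ => (1:ℝ)) := funext hA_ind
  -- conditional expectation of A·S factorizes
  have hEG : μ[fun ω' => A ω' * S ω'|MeasurableSpace.comap X inferInstance] =ᵐ[μ]
      fun ω => (μ[A|MeasurableSpace.comap X inferInstance]) ω
        * (μ[tS.indicator (fun _ => (1:ℝ))|MeasurableSpace.comap X inferInstance]) ω := by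
    rw [show (fun ω' => A ω' * S ω') = fun ω => A ω * tS.indicator (fun _ => (1:ℝ)) ω from cg2]
    exact F2
  -- chain of identities for E[A·S·Y | X]
  have hchain : μ[fun ω' => A ω' * S ω' * Y ω'|MeasurableSpace.comap X inferInstance] =ᵐ[μ]
      fun ω => (μ[Y₁|MeasurableSpace.comap X inferInstance]) ω
        * (μ[fun ω' => A ω' * S ω'|MeasurableSpace.comap X inferInstance]) ω := by
    rw [show (fun ω' => A ω' * S ω' * Y ω')
      = fun ω => (A ω * Y ω) * tS.indicator (fun _ => (1:ℝ)) ω from cg1]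
    have F3' : μ[fun ω => A ω * Y ω|MeasurableSpace.comap X inferInstance] =ᵐ[μ]
        fun ω => (μ[Y₁|MeasurableSpace.comap X inferInstance]) ω
          * (μ[A|MeasurableSpace.comap X inferInstance]) ω := by
      rw [cg3, cg4]
      exact F3
    filter_upwards [F1, F3', hEG] with ω h1 h3 h2
    rw [h1, h3, h2]
    ring
  -- identify μ₁ ∘ X with E[Y₁ | X] a.e.
  have hfinal : (fun ω => μ₁ (X ω)) =ᵐ[μ]
      μ[Y₁|MeasurableSpace.comap X inferInstance] := by
    filter_upwards [hμ₁ver, hchain, hASlb] with ω h1 h2 h5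
    have hEne : (μ[fun ω' => A ω' * S ω'|MeasurableSpace.comap X inferInstance]) ω ≠ 0 :=
      ne_of_gt (lt_of_lt_of_le hc h5)
    have h12 := h1.trans h2
    exact mul_right_cancel₀ hEne h12
  rw [integral_congr_ae hfinal, integral_condExp hm']
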